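/- Let G be a group and let n, k be positive integers with 1 ≤ k ≤ n. Suppose that the quotient group G/γ_j(G) is torsion-free for all 1 ≤ j ≤ n. Then λ̄_n(G) ∩ γ_k(G) = N_{n,k}(G). -/

import Mathlib

/-- `H^m`: the subgroup generated by the `m`-th powers of elements of `H`. -/
def sPow {G : Type*} [Group G] (H : Subgroup G) (m : ℕ) : Subgroup G :=
  Subgroup.closure ((fun h => h ^ m) '' (H : Set G))

/-- `γ_n(G)`, the lower central series indexed so that `γ_1(G) = G`. -/
def gamma (G : Type*) [Group G] (n : ℕ) : Subgroup G :=
  Subgroup.lowerCentralSeries (⊤ : Subgroup G) (n - 1)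

/-- `N_{n,k}(G) = γ_k(G)^{4^{n-k}} ⋯ γ_n(G)` (product of normal subgroups = join). -/
def Nnk (G : Type*) [Group G] (n k : ℕ) : Subgroup G :=
  ⨆ i ∈ Finset.Icc k n, sPow (gamma G i) (4 ^ (n - i))

/-- The `λ̄`-series: `λ̄_1(G) = G`, `λ̄_{n+1}(G) = λ̄_n(G)^4 [λ̄_n(G), G]`. -/
def lambdaBar (G : Type*) [Group G] : ℕ → Subgroup G
  | 0 => ⊤
  | 1 => ⊤
  | (n + 2) => sPow (lambdaBar G (n + 1)) 4 ⊔ ⁅lambdaBar G (n + 1), (⊤ : Subgroup G)⁆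

/-- The lower `p`-central series: `λ_1(G) = G`, `λ_{n+1}(G) = λ_n(G)^p [λ_n(G), G]`. -/
def lowP (G : Type*) [Group G] (p : ℕ) : ℕ → Subgroup G
  | 0 => ⊤
  | 1 => ⊤
  | (n + 2) => sPow (lowP G p (n + 1)) p ⊔ ⁅lowP G p (n + 1), (⊤ : Subgroup G)⁆

/-- `Ω_i(G)`: subgroup generated by elements of order dividing `p^i`. -/
def Omega (G : Type*) [Group G] (p i : ℕ) : Subgroup G :=
  Subgroup.closure {x : G | x ^ p ^ i = 1}

/-- A finite `p`-group is `p`-central if `Ω_1(G) ≤ Z(G)` for odd `p`,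
resp. `Ω_2(G) ≤ Z(G)` for `p = 2`. -/
def IsPCentral (p : ℕ) (G : Type*) [Group G] : Prop :=
  if p = 2 then Omega G 2 2 ≤ Subgroup.center G else Omega G p 1 ≤ Subgroup.center G

instance gamma_normal (G : Type*) [Group G] (n : ℕ) : (gamma G n).Normal :=
  inferInstanceAs (Subgroup.lowerCentralSeries (⊤ : Subgroup G) (n - 1)).Normal

instance sPow_normal {G : Type*} [Group G] (H : Subgroup G) [hH : H.Normal] (m : ℕ) :
    (sPow H m).Normal := by
  constructor
  intro x hx g
  induction hx using Subgroup.closure_induction with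
  | mem y hy =>
    obtain ⟨h, hh, rfl⟩ := hy
    exact Subgroup.subset_closure ⟨g * h * g⁻¹, hH.conj_mem h hh g, by
      simp [conj_pow]⟩
  | one => simpa using (sPow H m).one_mem
  | mul a b _ _ ha hb =>
    have : g * (a * b) * g⁻¹ = (g * a * g⁻¹) * (g * b * g⁻¹) := by group
    rw [this]; exact (sPow H m).mul_mem ha hb
  | inv a _ ha =>
    have : g * a⁻¹ * g⁻¹ = (g * a * g⁻¹)⁻¹ := by group
    rw [this]; exact (sPow H m).inv_mem ha

theorem normal_iSup {G : Type*} [Group G] {ι : Sort*} (f : ι → Subgroup G)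
    (h : ∀ i, (f i).Normal) : (⨆ i, f i).Normal := by
  constructor
  intro x hx g
  refine Subgroup.iSup_induction f (C := fun y => g * y * g⁻¹ ∈ ⨆ i, f i) hx
    (fun i y hy => Subgroup.mem_iSup_of_mem i ((h i).conj_mem y hy g)) (by simpa using Subgroup.one_mem (⨆ i, f i)) ?_
  intro a b ha hb
  have : g * (a * b) * g⁻¹ = (g * a * g⁻¹) * (g * b * g⁻¹) := by group
  rw [this]; exact Subgroup.mul_mem _ ha hb

instance Nnk_normal (G : Type*) [Group G] (n k : ℕ) : (Nnk G n k).Normal :=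
  normal_iSup _ fun i => normal_iSup _ fun _ => inferInstance

instance lambdaBar_normal (G : Type*) [Group G] : ∀ n, (lambdaBar G n).Normal
  | 0 => inferInstanceAs (⊤ : Subgroup G).Normal
  | 1 => inferInstanceAs (⊤ : Subgroup G).Normal
  | (n + 2) => by
    haveI := lambdaBar_normal G (n + 1)
    exact inferInstanceAs
      (sPow (lambdaBar G (n + 1)) 4 ⊔ ⁅lambdaBar G (n + 1), (⊤ : Subgroup G)⁆).Normal

instance lowP_normal (G : Type*) [Group G] (p : ℕ) : ∀ n, (lowP G p n).Normal
  | 0 => inferInstanceAs (⊤ : Subgroup G).Normal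
  | 1 => inferInstanceAs (⊤ : Subgroup G).Normal
  | (n + 2) => by
    haveI := lowP_normal G p (n + 1)
    exact inferInstanceAs
      (sPow (lowP G p (n + 1)) p ⊔ ⁅lowP G p (n + 1), (⊤ : Subgroup G)⁆).Normal

/-- The old Mathlib `Monoid.IsTorsionFree` (removed): no nontrivial element has finite order. -/
def Monoid.IsTorsionFree (G : Type*) [Monoid G] : Prop :=
  ∀ g : G, g ≠ 1 → ¬IsOfFinOrder g

open scoped commutatorElement

section Machinery
open Subgroup

variable {G : Type*} [Group G]

theorem lcs_succ' (a : ℕ) :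
    Subgroup.lowerCentralSeries (⊤ : Subgroup G) (a+1) = ⁅Subgroup.lowerCentralSeries (⊤ : Subgroup G) a, (⊤ : Subgroup G)⁆ := rfl

theorem three_subgroups {A B C N : Subgroup G} [N.Normal] (h1 : ⁅⁅B,C⁆,A⁆ ≤ N)
    (h2 : ⁅⁅C,A⁆,B⁆ ≤ N) : ⁅⁅A,B⁆,C⁆ ≤ N := by
  let f := QuotientGroup.mk' N
  have key : ∀ X Y Z : Subgroup G, ⁅⁅X,Y⁆,Z⁆ ≤ N ↔ ⁅⁅map f X, map f Y⁆, map f Z⁆ = ⊥ := by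
    intro X Y Z
    rw [← map_commutator, ← map_commutator, Subgroup.map_eq_bot_iff, QuotientGroup.ker_mk']
  rw [key]
  exact Subgroup.commutator_commutator_eq_bot_of_rotate ((key _ _ _).mp h1) ((key _ _ _).mp h2)

theorem lcs_comm (a b : ℕ) : ⁅Subgroup.lowerCentralSeries (⊤ : Subgroup G) a, Subgroup.lowerCentralSeries (⊤ : Subgroup G) b⁆
    ≤ Subgroup.lowerCentralSeries (⊤ : Subgroup G) (a+b+1) := by
  induction b generalizing a with
  | zero =>
    rw [Subgroup.lowerCentralSeries_zero]
    exact (lcs_succ' a).symm.le.trans' (le_refl _)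
  | succ b ih =>
    rw [lcs_succ', Subgroup.commutator_comm]
    refine three_subgroups ?_ ?_
    · rw [Subgroup.commutator_comm (⊤ : Subgroup G), ← lcs_succ']
      exact le_trans (ih (a+1)) (Subgroup.lowerCentralSeries_antitone _ (by omega))
    · refine le_trans (Subgroup.commutator_mono (ih a) le_top) ?_
      rw [← lcs_succ']
      exact Subgroup.lowerCentralSeries_antitone _ (by omega)

/-! gamma lemmas -/

theorem gamma_le {i j : ℕ} (h : i ≤ j) : gamma G j ≤ gamma G i :=
  Subgroup.lowerCentralSeries_antitone _ (by omega)

theorem gamma_one' : gamma G 1 = ⊤ := rfl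

theorem gamma_succ' {i : ℕ} (hi : 1 ≤ i) :
    gamma G (i+1) = ⁅gamma G i, (⊤ : Subgroup G)⁆ := by
  obtain ⟨i, rfl⟩ := Nat.exists_eq_add_of_le hi
  show Subgroup.lowerCentralSeries (⊤ : Subgroup G) (1 + i + 1 - 1) = _
  rw [show 1 + i + 1 - 1 = (1 + i - 1) + 1 by omega, lcs_succ']
  rfl

theorem gamma_comm {i j : ℕ} (hi : 1 ≤ i) (hj : 1 ≤ j) :
    ⁅gamma G i, gamma G j⁆ ≤ gamma G (i+j) := by
  refine (lcs_comm (i-1) (j-1)).trans ?_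
  unfold gamma
  exact Subgroup.lowerCentralSeries_antitone _ (by omega)

theorem gamma_comm_mem {i j : ℕ} (hi : 1 ≤ i) (hj : 1 ≤ j) {x y : G}
    (hx : x ∈ gamma G i) (hy : y ∈ gamma G j) : ⁅x, y⁆ ∈ gamma G (i+j) :=
  gamma_comm hi hj (Subgroup.commutator_mem_commutator hx hy)

/-! sPow lemmas -/

theorem mem_sPow {H : Subgroup G} {h : G} (hh : h ∈ H) (m : ℕ) : h ^ m ∈ sPow H m :=
  Subgroup.subset_closure ⟨h, hh, rfl⟩

theorem sPow_le {H : Subgroup G} {K : Subgroup G} (hHK : H ≤ K) (m : ℕ) :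
    sPow H m ≤ sPow K m :=
  Subgroup.closure_mono (Set.image_mono hHK)

theorem sPow_le_self (H : Subgroup G) (m : ℕ) : sPow H m ≤ H := by
  rw [sPow, Subgroup.closure_le]
  rintro _ ⟨h, hh, rfl⟩
  exact H.pow_mem hh m

theorem sPow_le_of_le {H : Subgroup G} {K : Subgroup G} (hHK : H ≤ K) (m : ℕ) :
    sPow H m ≤ K := (sPow_le_self H m).trans hHK

theorem sPow_one (H : Subgroup G) : sPow H 1 = H := by
  rw [sPow]
  simp only [pow_one, Set.image_id']
  exact Subgroup.closure_eq H

theorem sPow_le_target {H : Subgroup G} {K : Subgroup G} (m : ℕ)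
    (h : ∀ x ∈ H, x ^ m ∈ K) : sPow H m ≤ K := by
  rw [sPow, Subgroup.closure_le]
  rintro _ ⟨x, hx, rfl⟩
  exact h x hx

theorem sPow_mul_le (H : Subgroup G) (a b : ℕ) : sPow H (a * b) ≤ sPow H b := by
  refine sPow_le_target _ fun x hx => ?_
  rw [pow_mul]
  exact mem_sPow (H.pow_mem hx a) b

end Machinery
section VFilt
open Subgroup

variable (G : Type*) [Group G]

/-- Generating set of the weighted filtration subgroup. -/
def VSet (C t m : ℕ) : Set G :=
  {x : G | ∃ i, m ≤ i ∧ i ≤ C ∧ ∃ h ∈ gamma G i, h ^ 2^(t - 2*i) = x} ∪ (gamma G C : Set G)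

/-- The weighted filtration subgroup `V C t m`: generated by `2^(t-2i)`-th powers of `γ_i`
for `m ≤ i ≤ C`, together with `γ_C`. -/
def V (C t m : ℕ) : Subgroup G := Subgroup.closure (VSet G C t m)

variable {G}

theorem closure_normal_of_conj {S : Set G} (h : ∀ (g : G), ∀ x ∈ S, g * x * g⁻¹ ∈ S) :
    (Subgroup.closure S).Normal := by
  constructor
  intro x hx g
  induction hx using Subgroup.closure_induction with
  | mem y hy => exact Subgroup.subset_closure (h g y hy)
  | one => simpa using Subgroup.one_mem _
  | mul a b _ _ ha hb =>
    have : g * (a * b) * g⁻¹ = (g * a * g⁻¹) * (g * b * g⁻¹) := by group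
    rw [this]; exact Subgroup.mul_mem _ ha hb
  | inv a _ ha =>
    have : g * a⁻¹ * g⁻¹ = (g * a * g⁻¹)⁻¹ := by group
    rw [this]; exact Subgroup.inv_mem _ ha

instance V_normal (C t m : ℕ) : (V G C t m).Normal := by
  refine closure_normal_of_conj fun g x hx => ?_
  rcases hx with ⟨i, him, hiC, h, hh, rfl⟩ | hx
  · exact Or.inl ⟨i, him, hiC, g * h * g⁻¹, (gamma_normal G i).conj_mem h hh g, conj_pow ..⟩
  · exact Or.inr ((gamma_normal G C).conj_mem x hx g)

theorem gammaC_le_V {C t m : ℕ} : gamma G C ≤ V G C t m :=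
  fun x hx => Subgroup.subset_closure (Or.inr hx)

theorem pow_mem_V' {C t m i : ℕ} (him : m ≤ i) (hiC : i ≤ C) {h : G} (hh : h ∈ gamma G i) :
    h ^ 2^(t - 2*i) ∈ V G C t m :=
  Subgroup.subset_closure (Or.inl ⟨i, him, hiC, h, hh, rfl⟩)

theorem V_antitone_t {C t t' m : ℕ} (h : t ≤ t') : V G C t' m ≤ V G C t m := by
  rw [V, Subgroup.closure_le]
  rintro x (⟨i, him, hiC, h, hh, rfl⟩ | hx)
  · have : (2:ℕ)^(t' - 2*i) = 2^((t' - 2*i) - (t - 2*i)) * 2^(t - 2*i) := by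
      rw [← pow_add]; congr 1; omega
    rw [this, pow_mul]
    exact pow_mem_V' him hiC (Subgroup.pow_mem _ hh _)
  · exact gammaC_le_V hx

theorem V_antitone_m {C t m m' : ℕ} (h : m ≤ m') : V G C t m' ≤ V G C t m := by
  rw [V, Subgroup.closure_le]
  rintro x (⟨i, him, hiC, y, hy, rfl⟩ | hx)
  · exact pow_mem_V' (le_trans h him) hiC hy
  · exact gammaC_le_V hx

/-- `x ∈ γ_i` implies `x^(2^e) ∈ V C (2i+e) m` whenever `m ≤ i`. -/
theorem pow_mem_V_level {C t m i e : ℕ} (hm : m ≤ i) {h : G} (hh : h ∈ gamma G i)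
    (ht : t ≤ 2*i + e) : h ^ 2^e ∈ V G C t m := by
  rcases le_or_gt i C with hiC | hiC
  · have h2 : (2:ℕ)^e = 2^(e - (t - 2*i)) * 2^(t - 2*i) := by
      rw [← pow_add]; congr 1; omega
    rw [h2, pow_mul]
    exact pow_mem_V' hm hiC (Subgroup.pow_mem _ hh _)
  · exact gammaC_le_V (gamma_le (by omega) (Subgroup.pow_mem _ hh _))

theorem V_le_gamma {C t m : ℕ} : V G C t m ≤ gamma G (min m C) := by
  rw [V, Subgroup.closure_le]
  rintro x (⟨i, him, hiC, h, hh, rfl⟩ | hx)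
  · exact gamma_le (le_trans (min_le_left _ _) him) (Subgroup.pow_mem _ hh _)
  · exact gamma_le (min_le_right _ _) hx

theorem top_le_V {C : ℕ} (hC : 1 ≤ C) {t : ℕ} (ht : t ≤ 2) : (⊤ : Subgroup G) ≤ V G C t 1 := by
  intro x _
  have : x = x ^ 2^(t - 2*1) := by
    rw [show t - 2*1 = 0 by omega, pow_zero, pow_one]
  rw [this]
  exact pow_mem_V' le_rfl hC (Subgroup.mem_top x)

theorem V_small_le_succ {C t m : ℕ} (hm : 1 ≤ m) (ht : t + 1 ≤ 2) :
    V G C t m ≤ V G C (t+1) m := by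
  rw [V, Subgroup.closure_le]
  rintro x (⟨i, him, hiC, h, hh, rfl⟩ | hx)
  · have : (2:ℕ)^(t - 2*i) = 2^((t+1) - 2*i) := by congr 1; omega
    rw [this]
    exact pow_mem_V' him hiC hh
  · exact gammaC_le_V hx

end VFilt

theorem V_mono {G : Type*} [Group G] {C t t' m m' : ℕ} (ht : t ≤ t') (hm : m ≤ m') :
    V G C t' m' ≤ V G C t m :=
  (V_antitone_m hm).trans (V_antitone_t ht)
section Master
open Subgroup

variable {G : Type*} [Group G]

/-- Master lemma: squaring, elementwise commutator estimates, and subgroup commutator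
estimates for the weighted filtration, by downward induction on weight. -/
theorem master (C : ℕ) (hC : 1 ≤ C) : ∀ r : ℕ,
    (∀ m t, 1 ≤ m → C + 1 ≤ m + r → ∀ w ∈ V G C t m, w^2 ∈ V G C (t+1) m) ∧
    (∀ i j a b, 1 ≤ i → 1 ≤ j → C + 1 ≤ i + j + r → ∀ x ∈ gamma G i, ∀ y ∈ gamma G j,
      ⁅x^(2^a), y^(2^b)⁆ ∈ V G C (2*i+2*j+a+b) (i+j)) ∧
    (∀ i j s t, 1 ≤ i → 1 ≤ j → C + 1 ≤ i + j + r →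
      ⁅V G C s i, V G C t j⁆ ≤ V G C (s+t) (i+j)) := by
  intro r
  induction r with
  | zero =>
    refine ⟨fun m t hm hmr w hw => ?_, fun i j a b hi hj hr x hx y hy => ?_,
      fun i j s t hi hj hr => ?_⟩
    · have h1 : w ∈ gamma G C := by
        have := V_le_gamma hw
        rwa [min_eq_right (by omega)] at this
      exact gammaC_le_V (Subgroup.pow_mem _ h1 2)
    · refine gammaC_le_V (gamma_le (i := C) (j := i+j) (by omega) ?_)
      exact gamma_comm_mem hi hj (Subgroup.pow_mem _ hx _) (Subgroup.pow_mem _ hy _)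
    · refine le_trans (Subgroup.commutator_mono V_le_gamma V_le_gamma) ?_
      refine le_trans (gamma_comm (by omega) (by omega)) ?_
      exact le_trans (gamma_le (i := C) (by omega)) gammaC_le_V
  | succ r ih =>
    obtain ⟨Sr, Er, Mr⟩ := ih
    -- Squaring lemma at this level
    have Snew : ∀ m t, 1 ≤ m → C + 1 ≤ m + (r+1) → ∀ w ∈ V G C t m,
        w^2 ∈ V G C (t+1) m := by
      intro m t hm hmr
      rcases le_or_gt t 1 with ht | ht
      · intro w hw
        rw [pow_two]
        exact Subgroup.mul_mem _ (V_small_le_succ hm (by omega) hw)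
          (V_small_le_succ hm (by omega) hw)
      have hM : ⁅V G C t m, V G C t m⁆ ≤ V G C (t+1) m := by
        refine le_trans (Mr m m t t hm hm (by omega)) ?_
        exact V_mono (by omega) (by omega)
      -- square of a generator
      have genSq : ∀ x ∈ VSet G C t m, x^2 ∈ V G C (t+1) m := by
        rintro x (⟨i, him, hiC, h, hh, rfl⟩ | hx)
        · have h2 : ((h ^ 2^(t - 2*i))^2 : G) = h ^ 2^((t - 2*i)+1) := by
            rw [← pow_mul, ← pow_succ]
          rw [h2]
          exact pow_mem_V_level him hh (by omega)
        · exact gammaC_le_V (Subgroup.pow_mem _ hx 2)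
      have Saux : ∀ w, w ∈ Subgroup.closure (VSet G C t m) →
          w ∈ V G C t m ∧ w^2 ∈ V G C (t+1) m := by
        intro w hw
        induction hw using Subgroup.closure_induction with
        | mem g hg => exact ⟨Subgroup.subset_closure hg, genSq g hg⟩
        | one => exact ⟨Subgroup.one_mem _, by simpa using Subgroup.one_mem _⟩
        | mul g y hg hy ihg ihy =>
          refine ⟨Subgroup.mul_mem _ ihg.1 ihy.1, ?_⟩
          have hid : (g*y)^2 = g^2 * ⁅g⁻¹, y⁆ * y^2 := by
            simp only [pow_two]; group
          rw [hid]
          exact Subgroup.mul_mem _ (Subgroup.mul_mem _ ihg.2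
            (hM (Subgroup.commutator_mem_commutator (Subgroup.inv_mem _ ihg.1) ihy.1))) ihy.2
        | inv g hg ihg =>
          refine ⟨Subgroup.inv_mem _ ihg.1, ?_⟩
          rw [inv_pow]
          exact Subgroup.inv_mem _ ihg.2
      exact fun w hw => (Saux w hw).2
    -- Elementwise commutator lemma at this level
    have Enew : ∀ a b i j, 1 ≤ i → 1 ≤ j → C + 1 ≤ i + j + (r+1) →
        ∀ x ∈ gamma G i, ∀ y ∈ gamma G j,
        ⁅x^(2^a), y^(2^b)⁆ ∈ V G C (2*i+2*j+a+b) (i+j) := by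
      have Ebase : ∀ i j, 1 ≤ i → 1 ≤ j → ∀ x ∈ gamma G i, ∀ y ∈ gamma G j,
          ⁅x, y⁆ ∈ V G C (2*i+2*j) (i+j) := by
        intro i j hi hj x hx y hy
        have h1 : ⁅x, y⁆ ∈ gamma G (i+j) := gamma_comm_mem hi hj hx hy
        have h2 := pow_mem_V_level (C := C) (t := 2*i+2*j) (e := 0) (le_refl (i+j)) h1
          (by omega)
        simpa using h2
      suffices H : ∀ (N a b : ℕ), a + b ≤ N → ∀ i j, 1 ≤ i → 1 ≤ j →
          C + 1 ≤ i + j + (r+1) → ∀ x ∈ gamma G i, ∀ y ∈ gamma G j,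
          ⁅x^(2^a), y^(2^b)⁆ ∈ V G C (2*i+2*j+a+b) (i+j) by
        intro a b; exact H (a+b) a b le_rfl
      intro N
      induction N with
      | zero =>
        intro a b hab i j hi hj hr x hx y hy
        obtain ⟨rfl, rfl⟩ : a = 0 ∧ b = 0 := by omega
        simpa using Ebase i j hi hj x hx y hy
      | succ N ihN =>
        intro a b hab i j hi hj hr x hx y hy
        match a, b with
        | 0, 0 => simpa using Ebase i j hi hj x hx y hy
        | a'+1, b =>
          set u := x^(2^a') with hu
          set v := y^(2^b) with hv
          set w := ⁅u, v⁆ with hwdef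
          have hw : w ∈ V G C (2*i+2*j+a'+b) (i+j) :=
            ihN a' b (by omega) i j hi hj hr x hx y hy
          have hxp : x^(2^(a'+1)) = u^2 := by
            rw [hu, ← pow_mul, ← pow_succ]
          have hid : ⁅u^2, v⁆ = ⁅u, w⁆ * w^2 := by
            rw [hwdef]; simp only [pow_two]; group
          rw [hxp, hid]
          refine Subgroup.mul_mem _ ?_ ?_
          · have hu' : u ∈ V G C (2*i+a') i := pow_mem_V_level le_rfl hx le_rfl
            have h3 : ⁅u, w⁆ ∈ V G C ((2*i+a') + (2*i+2*j+a'+b)) (i + (i+j)) :=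
              Mr i (i+j) (2*i+a') (2*i+2*j+a'+b) hi (by omega) (by omega)
                (Subgroup.commutator_mem_commutator hu' hw)
            exact V_mono (by omega) (by omega) h3
          · have h4 : w^2 ∈ V G C ((2*i+2*j+a'+b)+1) (i+j) :=
              Snew (i+j) (2*i+2*j+a'+b) (by omega) (by omega) w hw
            exact V_mono (by omega) le_rfl h4
        | 0, b'+1 =>
          set u := x^(2^(0:ℕ)) with hu
          set v := y^(2^b') with hv
          set w := ⁅u, v⁆ with hwdef
          have hw : w ∈ V G C (2*i+2*j+0+b') (i+j) :=
            ihN 0 b' (by omega) i j hi hj hr x hx y hy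
          have hyp : y^(2^(b'+1)) = v^2 := by
            rw [hv, ← pow_mul, ← pow_succ]
          have hid : ⁅u, v^2⁆ = w^2 * ⁅w⁻¹, v⁆ := by
            rw [hwdef]; simp only [pow_two]; group
          rw [hyp, hid]
          refine Subgroup.mul_mem _ ?_ ?_
          · have h4 : w^2 ∈ V G C ((2*i+2*j+0+b')+1) (i+j) :=
              Snew (i+j) (2*i+2*j+0+b') (by omega) (by omega) w hw
            exact V_mono (by omega) le_rfl h4
          · have hv' : v ∈ V G C (2*j+b') j := pow_mem_V_level le_rfl hy le_rfl
            have h3 : ⁅w⁻¹, v⁆ ∈ V G C ((2*i+2*j+0+b') + (2*j+b')) ((i+j) + j) :=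
              Mr (i+j) j (2*i+2*j+0+b') (2*j+b') (by omega) hj (by omega)
                (Subgroup.commutator_mem_commutator (Subgroup.inv_mem _ hw) hv')
            exact V_mono (by omega) (by omega) h3
    -- Subgroup commutator lemma at this level
    have Mnew : ∀ i j s t, 1 ≤ i → 1 ≤ j → C + 1 ≤ i + j + (r+1) →
        ⁅V G C s i, V G C t j⁆ ≤ V G C (s+t) (i+j) := by
      intro i j s t hi hj hr
      rw [Subgroup.commutator_le]
      intro h hh
      have hh' : h ∈ Subgroup.closure (VSet G C s i) := hh
      clear hh
      induction hh' using Subgroup.closure_induction with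
      | mem g hg =>
        intro k hk
        rcases hg with ⟨p, hip, hpC, xg, hxg, rfl⟩ | hgC
        · -- inner induction on k
          have hk' : k ∈ Subgroup.closure (VSet G C t j) := hk
          clear hk
          induction hk' using Subgroup.closure_induction with
          | mem z hz =>
            rcases hz with ⟨q, hjq, hqC, yg, hyg, rfl⟩ | hzC
            · have h5 := Enew (s - 2*p) (t - 2*q) p q (by omega) (by omega) (by omega)
                xg hxg yg hyg
              exact V_mono (by omega) (by omega) h5
            · have hidc : ⁅xg ^ 2^(s-2*p), z⁆
                  = (xg ^ 2^(s-2*p) * z * (xg ^ 2^(s-2*p))⁻¹) * z⁻¹ := by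
                group
              rw [hidc]
              refine gammaC_le_V (Subgroup.mul_mem _ ?_ (Subgroup.inv_mem _ hzC))
              exact (gamma_normal G C).conj_mem z hzC _
          | one => simpa using Subgroup.one_mem _
          | mul k₁ k₂ hk₁ hk₂ ih₁ ih₂ =>
            have hid : ∀ g k₁ k₂ : G, ⁅g, k₁*k₂⁆ = ⁅g,k₁⁆ * (k₁ * ⁅g,k₂⁆ * k₁⁻¹) := by
              intro g k₁ k₂; group
            rw [hid]
            exact Subgroup.mul_mem _ ih₁ ((V_normal C (s+t) (i+j)).conj_mem _ ih₂ k₁)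
          | inv k₁ hk₁ ih₁ =>
            have hid : ∀ g k₁ : G, ⁅g, k₁⁻¹⁆ = k₁⁻¹ * ⁅g,k₁⁆⁻¹ * k₁ := by
              intro g k₁; group
            rw [hid]
            simpa using (V_normal C (s+t) (i+j)).conj_mem _ (Subgroup.inv_mem _ ih₁) k₁⁻¹
        · -- h ∈ γ_C : commutator lands in γ_C
          have hidc : ⁅g, k⁆ = g * (k * g⁻¹ * k⁻¹) := by group
          rw [hidc]
          refine gammaC_le_V (Subgroup.mul_mem _ hgC ?_)
          exact (gamma_normal G C).conj_mem _ (Subgroup.inv_mem _ hgC) k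
      | one => intro k hk; simpa using Subgroup.one_mem _
      | mul h₁ h₂ hh₁ hh₂ ih₁ ih₂ =>
        intro k hk
        have hid : ⁅h₁*h₂, k⁆ = (h₁ * ⁅h₂,k⁆ * h₁⁻¹) * ⁅h₁,k⁆ := by group
        rw [hid]
        exact Subgroup.mul_mem _ ((V_normal C (s+t) (i+j)).conj_mem _ (ih₂ k hk) h₁)
          (ih₁ k hk)
      | inv h₁ hh₁ ih₁ =>
        intro k hk
        have hid : ⁅h₁⁻¹, k⁆ = h₁⁻¹ * ⁅h₁,k⁆⁻¹ * h₁ := by group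
        rw [hid]
        simpa using (V_normal C (s+t) (i+j)).conj_mem _ (Subgroup.inv_mem _ (ih₁ k hk)) h₁⁻¹
    exact ⟨Snew, fun i j a b => Enew a b i j, Mnew⟩

end Master
section Collection
open Subgroup

variable {G : Type*} [Group G]

/-- Collection lemma: products of `2^e`-th powers of elements of `γ_m` collect into a single
`2^e`-th power modulo the filtration. -/
theorem collectP (C : ℕ) (hC : 1 ≤ C) (m : ℕ) (hm : 1 ≤ m) (e : ℕ)
    {x y : G} (hx : x ∈ gamma G m) (hy : y ∈ gamma G m) :
    (x^(2^e) * y^(2^e))⁻¹ * (x*y)^(2^e) ∈ V G C (4*m + e - 1) (2*m) := by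
  obtain ⟨MS, ME, MM⟩ := master (G := G) C hC C
  induction e with
  | zero =>
    have h0 : (x^(2^(0:ℕ)) * y^(2^(0:ℕ)))⁻¹ * (x*y)^(2^(0:ℕ)) = 1 := by
      simp only [pow_zero, pow_one]; group
    rw [h0]; exact Subgroup.one_mem _
  | succ e ihe =>
    set A := x^(2^e) with hA
    set B := y^(2^e) with hB
    set c := (A*B)⁻¹ * (x*y)^(2^e) with hc
    have hcV : c ∈ V G C (4*m + e - 1) (2*m) := ihe
    have hxp : x^(2^(e+1)) = A^2 := by rw [hA, ← pow_mul, ← pow_succ]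
    have hyp : y^(2^(e+1)) = B^2 := by rw [hB, ← pow_mul, ← pow_succ]
    have hPp : (x*y)^(2^(e+1)) = (A*B*c)^2 := by
      have h1 : A*B*c = (x*y)^(2^e) := by rw [hc]; group
      rw [h1, ← pow_mul, ← pow_succ]
    rw [hxp, hyp, hPp]
    have hid : (A^2*B^2)⁻¹ * (A*B*c)^2
        = (B⁻¹ * ⁅B⁻¹, A⁻¹⁆ * B) * (⁅(A*B)⁻¹, c⁆ * c^2) := by
      simp only [pow_two]; group
    rw [hid]
    have hd : B⁻¹ * ⁅B⁻¹, A⁻¹⁆ * B ∈ V G C (4*m + e) (2*m) := by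
      have h2 : ⁅B⁻¹, A⁻¹⁆ = ⁅(y⁻¹)^(2^e), (x⁻¹)^(2^e)⁆ := by
        rw [hA, hB, inv_pow, inv_pow]
      have h3 : ⁅(y⁻¹)^(2^e), (x⁻¹)^(2^e)⁆ ∈ V G C (2*m+2*m+e+e) (m+m) :=
        ME m m e e hm hm (by omega) y⁻¹ (Subgroup.inv_mem _ hy) x⁻¹ (Subgroup.inv_mem _ hx)
      have h4 : ⁅B⁻¹, A⁻¹⁆ ∈ V G C (4*m + e) (2*m) := by
        rw [h2]; exact V_mono (by omega) (by omega) h3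
      simpa using (V_normal C (4*m+e) (2*m)).conj_mem _ h4 B⁻¹
    have hcom : ⁅(A*B)⁻¹, c⁆ ∈ V G C (4*m + e) (2*m) := by
      have hu : (A*B)⁻¹ ∈ V G C 2 1 := top_le_V hC le_rfl (Subgroup.mem_top _)
      have h5 := MM 1 (2*m) 2 (4*m + e - 1) le_rfl (by omega) (by omega)
        (Subgroup.commutator_mem_commutator hu hcV)
      exact V_mono (by omega) (by omega) h5
    have hc2 : c^2 ∈ V G C (4*m + e) (2*m) := by
      have h6 := MS (2*m) (4*m + e - 1) (by omega) (by omega) c hcV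
      exact V_mono (by omega) le_rfl h6
    exact Subgroup.mul_mem _ hd (Subgroup.mul_mem _ hcom hc2)

end Collection

section Identify
open Subgroup

variable {G : Type*} [Group G]

theorem mem_Nnk_pow {n k i : ℕ} (hk : k ≤ i) (hin : i ≤ n) {h : G} (hh : h ∈ gamma G i) :
    h ^ 4^(n-i) ∈ Nnk G n k := by
  refine Subgroup.mem_iSup_of_mem i (Subgroup.mem_iSup_of_mem ?_ ?_)
  · exact Finset.mem_Icc.mpr ⟨hk, hin⟩
  · exact mem_sPow hh _

theorem Nnk_le_gamma {n k : ℕ} (hk : 1 ≤ k) : Nnk G n k ≤ gamma G k := by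
  refine iSup₂_le fun i hi => ?_
  exact sPow_le_of_le (gamma_le (Finset.mem_Icc.mp hi).1) _

theorem Nnk_eq_V {n k : ℕ} (hk : 1 ≤ k) (hkn : k ≤ n) : Nnk G n k = V G n (2*n) k := by
  have hpow : ∀ i : ℕ, i ≤ n → (4:ℕ)^(n-i) = 2^(2*n - 2*i) := by
    intro i hi
    rw [show (4:ℕ) = 2^2 from rfl, ← pow_mul]
    congr 1; omega
  apply le_antisymm
  · refine iSup₂_le fun i hi => ?_
    obtain ⟨hki, hin⟩ := Finset.mem_Icc.mp hi
    refine sPow_le_target _ fun h hh => ?_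
    rw [hpow i hin]
    exact pow_mem_V' hki hin hh
  · rw [V, Subgroup.closure_le]
    rintro z (⟨i, him, hiC, h, hh, rfl⟩ | hz)
    · rw [← hpow i hiC]
      exact mem_Nnk_pow him hiC hh
    · have hz4 : z ^ (4:ℕ)^(n-n) = z := by rw [Nat.sub_self, pow_zero, pow_one]
      rw [← hz4]
      exact mem_Nnk_pow hkn le_rfl hz

end Identify
section Assembly
open Subgroup Pointwise

variable {G : Type*} [Group G]

theorem lambdaBar_succ' {m : ℕ} (hm : 1 ≤ m) :
    lambdaBar G (m+1) = sPow (lambdaBar G m) 4 ⊔ ⁅lambdaBar G m, (⊤ : Subgroup G)⁆ := by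
  cases m with
  | zero => omega
  | succ m => rfl

theorem gamma_le_lambdaBar : ∀ i : ℕ, 1 ≤ i → gamma G i ≤ lambdaBar G i := by
  intro i
  induction i with
  | zero => intro h; exact absurd h (by omega)
  | succ i ih =>
    intro _
    rcases Nat.eq_or_lt_of_le (Nat.one_le_iff_ne_zero.mpr (Nat.succ_ne_zero i)) with h | h
    · rw [show i = 0 by omega]
      exact le_top
    · have hi : 1 ≤ i := by omega
      rw [gamma_succ' hi, lambdaBar_succ' hi]
      exact le_sup_of_le_right (Subgroup.commutator_mono (ih hi) le_rfl)

theorem pow4_mem_lambdaBar {m : ℕ} (hm : 1 ≤ m) {h : G} (hh : h ∈ lambdaBar G m) :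
    ∀ j : ℕ, h ^ (4:ℕ)^j ∈ lambdaBar G (m+j) := by
  intro j
  induction j with
  | zero => simpa using hh
  | succ j ih =>
    have h1 : h ^ (4:ℕ)^(j+1) = (h ^ (4:ℕ)^j)^4 := by
      rw [← pow_mul, ← pow_succ]
    rw [h1, show m + (j+1) = (m+j) + 1 by omega, lambdaBar_succ' (by omega)]
    exact Subgroup.mem_sup_left (mem_sPow ih 4)

theorem Nnk_le_lambdaBar {n k : ℕ} (hk : 1 ≤ k) (hkn : k ≤ n) :
    Nnk G n k ≤ lambdaBar G n := by
  refine iSup₂_le fun i hi => ?_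
  obtain ⟨hki, hin⟩ := Finset.mem_Icc.mp hi
  refine sPow_le_target _ fun h hh => ?_
  have h1 : h ∈ lambdaBar G i := gamma_le_lambdaBar i (by omega) hh
  have h2 := pow4_mem_lambdaBar (by omega) h1 (n-i)
  rwa [show i + (n-i) = n by omega] at h2

theorem lambdaBar_le_V {n : ℕ} (hn : 1 ≤ n) :
    ∀ m : ℕ, 1 ≤ m → lambdaBar G m ≤ V G n (2*m) 1 := by
  obtain ⟨MS, ME, MM⟩ := master (G := G) n hn n
  intro m
  induction m with
  | zero => intro h; exact absurd h (by omega)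
  | succ m ih =>
    intro _
    rcases Nat.lt_or_ge m 1 with h | hm
    · rw [show m = 0 by omega]
      exact le_trans le_top (top_le_V hn (by omega))
    · rw [lambdaBar_succ' hm]
      refine sup_le ?_ ?_
      · refine le_trans (sPow_le (ih hm) 4) ?_
        refine sPow_le_target _ fun w hw => ?_
        have h1 : w^4 = (w^2)^2 := by rw [← pow_mul]
        have h2 : (w^2)^2 ∈ V G n (2*m+1+1) 1 :=
          MS 1 (2*m+1) le_rfl (by omega) _ (MS 1 (2*m) le_rfl (by omega) w hw)
        rw [h1]
        exact V_mono (by omega) le_rfl h2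
      · have h3 : ⁅lambdaBar G m, (⊤ : Subgroup G)⁆ ≤ ⁅V G n (2*m) 1, V G n 2 1⁆ :=
          Subgroup.commutator_mono (ih hm) (top_le_V hn le_rfl)
        refine le_trans h3 (le_trans (MM 1 1 (2*m) 2 le_rfl le_rfl (by omega)) ?_)
        exact V_mono (by omega) (by omega)

/-- Factorization: an element of `sPow (γ_k) (4^(n-k))` is a single `4^(n-k)`-th power
modulo `Nnk G n (k+1)`. -/
theorem sPow_factor {n k : ℕ} (hk : 1 ≤ k) (hkn : k + 1 ≤ n) :
    ∀ y ∈ sPow (gamma G k) (4^(n-k)),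
      ∃ h z : G, h ∈ gamma G k ∧ z ∈ Nnk G n (k+1) ∧ y = h^(4:ℕ)^(n-k) * z := by
  have hn : 1 ≤ n := by omega
  have herr : ∀ h₁ h₂ : G, h₁ ∈ gamma G k → h₂ ∈ gamma G k →
      (h₁^(4:ℕ)^(n-k) * h₂^(4:ℕ)^(n-k))⁻¹ * (h₁*h₂)^(4:ℕ)^(n-k) ∈ Nnk G n (k+1) := by
    intro h₁ h₂ hh₁ hh₂
    have h4 : (4:ℕ)^(n-k) = 2^(2*(n-k)) := by
      rw [show (4:ℕ) = 2^2 from rfl, ← pow_mul]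
    have := collectP n hn k hk (2*(n-k)) hh₁ hh₂
    rw [← h4] at this
    rw [Nnk_eq_V (by omega) hkn]
    exact V_mono (by omega) (by omega) this
  intro y hy
  induction hy using Subgroup.closure_induction with
  | mem g hg =>
    obtain ⟨h, hh, rfl⟩ := hg
    exact ⟨h, 1, hh, Subgroup.one_mem _, (mul_one _).symm⟩
  | one => exact ⟨1, 1, Subgroup.one_mem _, Subgroup.one_mem _, by simp⟩
  | mul y₁ y₂ hy₁ hy₂ ih₁ ih₂ =>
    obtain ⟨h₁, z₁, hh₁, hz₁, rfl⟩ := ih₁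
    obtain ⟨h₂, z₂, hh₂, hz₂, rfl⟩ := ih₂
    set q := (4:ℕ)^(n-k) with hq
    refine ⟨h₁*h₂, ((h₁^q * h₂^q)⁻¹ * (h₁*h₂)^q)⁻¹ * ((h₂^q)⁻¹ * z₁ * h₂^q) * z₂,
      Subgroup.mul_mem _ hh₁ hh₂, ?_, by group⟩
    refine Subgroup.mul_mem _ (Subgroup.mul_mem _ ?_ ?_) hz₂
    · exact Subgroup.inv_mem _ (herr h₁ h₂ hh₁ hh₂)
    · simpa using (Nnk_normal G n (k+1)).conj_mem _ hz₁ (h₂^q)⁻¹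
  | inv y₁ hy₁ ih₁ =>
    obtain ⟨h, z, hh, hz, rfl⟩ := ih₁
    set q := (4:ℕ)^(n-k) with hq
    refine ⟨h⁻¹, h^q * z⁻¹ * (h^q)⁻¹, Subgroup.inv_mem _ hh, ?_, ?_⟩
    · exact (Nnk_normal G n (k+1)).conj_mem _ (Subgroup.inv_mem _ hz) _
    · rw [inv_pow]
      group

/-- The inductive step: intersecting with the next term of the lower central series. -/
theorem Nnk_step {n k : ℕ} (hk : 1 ≤ k) (hkn : k + 1 ≤ n)
    (htf : Monoid.IsTorsionFree (G ⧸ gamma G (k+1))) :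
    Nnk G n k ⊓ gamma G (k+1) ≤ Nnk G n (k+1) := by
  intro x hx
  obtain ⟨hxN, hxg⟩ := hx
  set q := (4:ℕ)^(n-k) with hq
  -- split off the k-th term
  have hsplit : Nnk G n k = sPow (gamma G k) q ⊔ Nnk G n (k+1) := by
    rw [Nnk, Nnk, ← Finset.insert_Icc_add_one_left_eq_Icc (by omega : k ≤ n), Finset.iSup_insert]
  rw [hsplit] at hxN
  have hxN' : x ∈ ((sPow (gamma G k) q : Set G) * (Nnk G n (k+1) : Set G) : Set G) := by
    rw [← Subgroup.mul_normal]; exact hxN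
  obtain ⟨y, hy, z, hz, rfl⟩ := Set.mem_mul.mp hxN'
  obtain ⟨h, z₂, hh, hz₂, rfl⟩ := sPow_factor hk hkn y hy
  have hmem : h^q ∈ gamma G (k+1) := by
    have hid : h^q = (h^q * z₂ * z) * z⁻¹ * z₂⁻¹ := by group
    rw [hid]
    exact Subgroup.mul_mem _ (Subgroup.mul_mem _ hxg
      (Subgroup.inv_mem _ (Nnk_le_gamma (by omega) hz)))
      (Subgroup.inv_mem _ (Nnk_le_gamma (by omega) hz₂))
  have hφ : (QuotientGroup.mk h : G ⧸ gamma G (k+1)) = 1 := by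
    by_contra hne
    refine htf _ hne (isOfFinOrder_iff_pow_eq_one.mpr ⟨q, by positivity, ?_⟩)
    rw [← QuotientGroup.mk_pow]
    exact (QuotientGroup.eq_one_iff _).mpr hmem
  have hh1 : h ∈ gamma G (k+1) := (QuotientGroup.eq_one_iff h).mp hφ
  have hpow : h^q ∈ Nnk G n (k+1) := by
    have h41 : q = 4 * 4^(n-(k+1)) := by
      rw [hq, show n-k = (n-(k+1))+1 by omega, pow_succ']
    rw [h41, pow_mul]
    exact mem_Nnk_pow le_rfl (by omega) (Subgroup.pow_mem _ hh1 4)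
  exact Subgroup.mul_mem _ (Subgroup.mul_mem _ hpow hz₂) hz

end Assembly
theorem stmt_5 (G : Type*) [Group G] (n k : ℕ) (hk : 1 ≤ k) (hkn : k ≤ n)
    (htf : ∀ j, 1 ≤ j → j ≤ n → Monoid.IsTorsionFree (G ⧸ gamma G j)) :
    lambdaBar G n ⊓ gamma G k = Nnk G n k := by
  have hn : 1 ≤ n := le_trans hk hkn
  apply le_antisymm
  · have hlam : lambdaBar G n ≤ Nnk G n 1 := by
      rw [Nnk_eq_V le_rfl hn]
      exact lambdaBar_le_V hn n hn
    have hchain : ∀ k', 1 ≤ k' → k' ≤ n → Nnk G n 1 ⊓ gamma G k' ≤ Nnk G n k' := by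
      intro k'
      induction k' with
      | zero => intro h; exact absurd h (by omega)
      | succ k' ih =>
        intro _ hk'n
        rcases Nat.lt_or_ge k' 1 with h | h
        · have hz : k' = 0 := by omega
          subst hz
          exact inf_le_left
        · intro x hx
          obtain ⟨hx1, hx2⟩ := Subgroup.mem_inf.mp hx
          have hxk : x ∈ Nnk G n k' :=
            ih h (by omega) (Subgroup.mem_inf.mpr ⟨hx1, gamma_le (by omega) hx2⟩)
          exact Nnk_step h (by omega) (htf (k'+1) (by omega) hk'n)
            (Subgroup.mem_inf.mpr ⟨hxk, hx2⟩)
    intro x hx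
    obtain ⟨hx1, hx2⟩ := Subgroup.mem_inf.mp hx
    exact hchain k hk hkn (Subgroup.mem_inf.mpr ⟨hlam hx1, hx2⟩)
  · exact le_inf (Nnk_le_lambdaBar hk hkn) (Nnk_le_gamma hk)
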